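/- Let θ > 0, and W_ℓ ~ Poisson(θ/ℓ) independent. Suppose g : (0,∞) → ℝ satisfies |g(x)| ≤ C min(x, 1/x). Then for every n ≥ 1 and every δ ∈ (0,1), E[∑_{ℓ=1}^n W_ℓ |g(1/(ℓδ))|] and Var(∑_{ℓ=1}^n W_ℓ |g(1/(ℓδ))|) are both bounded by a constant depending only on C and θ (uniformly in n and δ). In particular ∑_{ℓ=1}^n W_ℓ g(1/(ℓδ)) is bounded in L². -/

import Mathlib

open Real MeasureTheory Filter Set ProbabilityTheory
open scoped ENNReal NNReal

section aux

lemma arctan_gap (a b : ℝ) (ha : 0 ≤ a) (hab : a ≤ b) :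
    (b - a) / (1 + b ^ 2) ≤ arctan b - arctan a := by
  rw [← integral_one_div_one_add_sq]
  have h1 : ∫ x : ℝ in a..b, (1 / (1 + b ^ 2) : ℝ) = (b - a) * (1 / (1 + b ^ 2)) := by
    simp [intervalIntegral.integral_const, smul_eq_mul]
  rw [div_eq_mul_one_div, ← h1]
  apply intervalIntegral.integral_mono_on hab (by simp [intervalIntegrable_const])
    intervalIntegral.intervalIntegrable_one_div_one_add_sq
  intro x hx
  have hx0 : 0 ≤ x := le_trans ha hx.1
  have : x ^ 2 ≤ b ^ 2 := by nlinarith [hx.2]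
  apply div_le_div_of_nonneg_left one_pos.le (by positivity) (by linarith)

lemma min_sum_le (n : ℕ) (δ : ℝ) (hδ : 0 < δ) :
    ∑ ℓ ∈ Finset.Icc 1 n, min δ (1 / ((ℓ : ℝ) ^ 2 * δ)) ≤ π := by
  have key : ∀ i : ℕ, min δ (1 / (((1 + i : ℕ) : ℝ) ^ 2 * δ)) ≤
      2 * (arctan (((i : ℝ) + 1) * δ) - arctan ((i : ℝ) * δ)) := by
    intro i
    have hL : (0:ℝ) < ((1 + i : ℕ) : ℝ) := by positivity
    have hLδ : (0:ℝ) < ((1 + i : ℕ) : ℝ) * δ := by positivity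
    have hgap := arctan_gap ((i : ℝ) * δ) (((i : ℝ) + 1) * δ) (by positivity) (by nlinarith)
    have hsub : ((i : ℝ) + 1) * δ - (i : ℝ) * δ = δ := by ring
    rw [hsub] at hgap
    have hb : ((i : ℝ) + 1) * δ = ((1 + i : ℕ) : ℝ) * δ := by push_cast; ring
    have hmin : min δ (1 / (((1 + i : ℕ) : ℝ) ^ 2 * δ)) ≤
        2 * (δ / (1 + (((i : ℝ) + 1) * δ) ^ 2)) := by
      rw [hb]
      set L : ℝ := ((1 + i : ℕ) : ℝ) with hLdef
      rcases le_total (L * δ) 1 with h | h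
      · refine le_trans (min_le_left _ _) ?_
        rw [← mul_div_assoc, le_div_iff₀ (by positivity)]
        nlinarith
      · refine le_trans (min_le_right _ _) ?_
        rw [← mul_div_assoc, div_le_div_iff₀ (by positivity) (by positivity)]
        nlinarith
    linarith
  have h2 : ∑ ℓ ∈ Finset.Icc 1 n, min δ (1 / ((ℓ : ℝ) ^ 2 * δ)) ≤
      ∑ i ∈ Finset.range n, 2 * (arctan (((i : ℝ) + 1) * δ) - arctan ((i : ℝ) * δ)) := by
    rw [← Finset.Ico_add_one_right_eq_Icc, Finset.sum_Ico_eq_sum_range]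
    have hnn : n + 1 - 1 = n := by omega
    rw [hnn]
    exact Finset.sum_le_sum fun i _ => key i
  have h3 : ∑ i ∈ Finset.range n, 2 * (arctan (((i : ℝ) + 1) * δ) - arctan ((i : ℝ) * δ)) =
      2 * (arctan ((n : ℝ) * δ) - arctan 0) := by
    rw [← Finset.mul_sum]
    congr 1
    have := Finset.sum_range_sub (fun i : ℕ => arctan ((i : ℝ) * δ)) n
    simp only [Nat.cast_zero, zero_mul] at this ⊢
    rw [← this]
    apply Finset.sum_congr rfl
    intro i _
    push_cast
    ring_nf
  rw [h3] at h2
  have := arctan_lt_pi_div_two ((n : ℝ) * δ)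
  simp only [arctan_zero, sub_zero] at h2
  nlinarith [this, Real.pi_pos]
lemma poisson_series_exp (lam : ℝ) :
    HasSum (fun n : ℕ => lam ^ n / n.factorial) (Real.exp lam) := by
  rw [Real.exp_eq_exp_ℝ]
  exact NormedSpace.expSeries_div_hasSum_exp lam

lemma poisson_mean_series (lam : ℝ) :
    HasSum (fun k : ℕ => (k : ℝ) * (Real.exp (-lam) * lam ^ k / k.factorial)) lam := by
  rw [← hasSum_nat_add_iff' 1]
  simp only [Finset.range_one, Finset.sum_singleton, Nat.cast_zero, zero_mul, sub_zero]
  have h : (fun n : ℕ => ((n + 1 : ℕ) : ℝ) *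
      (Real.exp (-lam) * lam ^ (n + 1) / (n + 1).factorial)) =
      fun n : ℕ => (Real.exp (-lam) * lam) * (lam ^ n / n.factorial) := by
    funext n
    have hf : ((n + 1).factorial : ℝ) = ((n + 1 : ℕ) : ℝ) * n.factorial := by
      rw [Nat.factorial_succ]; push_cast; ring
    have hne : ((n + 1 : ℕ) : ℝ) ≠ 0 := by positivity
    have hfn : (n.factorial : ℝ) ≠ 0 := by positivity
    rw [hf, pow_succ]
    field_simp
  rw [h]
  have := (poisson_series_exp lam).mul_left (Real.exp (-lam) * lam)
  convert this using 1
  · rfl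
  have hee : Real.exp (-lam) * Real.exp lam = 1 := by
    rw [← Real.exp_add]; simp
  calc lam = lam * (rexp (-lam) * rexp lam) := by rw [hee, mul_one]
    _ = rexp (-lam) * lam * rexp lam := by ring

lemma poisson_sq_series (lam : ℝ) :
    HasSum (fun k : ℕ => ((k : ℝ)) ^ 2 * (Real.exp (-lam) * lam ^ k / k.factorial))
      (lam + lam ^ 2) := by
  have h2 : HasSum (fun k : ℕ => (k : ℝ) * ((k : ℝ) - 1) *
      (Real.exp (-lam) * lam ^ k / k.factorial)) (lam ^ 2) := by
    rw [← hasSum_nat_add_iff' 2]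
    have hz : ∑ i ∈ Finset.range 2, (i : ℝ) * ((i : ℝ) - 1) *
        (Real.exp (-lam) * lam ^ i / i.factorial) = 0 := by
      simp [Finset.sum_range_succ]
    rw [hz, sub_zero]
    have h : (fun n : ℕ => ((n + 2 : ℕ) : ℝ) * (((n + 2 : ℕ) : ℝ) - 1) *
        (Real.exp (-lam) * lam ^ (n + 2) / (n + 2).factorial)) =
        fun n : ℕ => (Real.exp (-lam) * lam ^ 2) * (lam ^ n / n.factorial) := by
      funext n
      have hf : ((n + 2).factorial : ℝ) =
          ((n + 2 : ℕ) : ℝ) * ((n + 1 : ℕ) : ℝ) * n.factorial := by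
        rw [show n + 2 = (n + 1) + 1 by ring, Nat.factorial_succ, Nat.factorial_succ]
        push_cast; ring
      have hfn : (n.factorial : ℝ) ≠ 0 := by positivity
      have h1 : ((n + 2 : ℕ) : ℝ) ≠ 0 := by positivity
      have h2' : ((n + 1 : ℕ) : ℝ) ≠ 0 := by positivity
      have hc : (((n + 2 : ℕ) : ℝ) - 1) = ((n + 1 : ℕ) : ℝ) := by push_cast; ring
      rw [hc, hf, pow_add]
      field_simp
    rw [h]
    have := (poisson_series_exp lam).mul_left (Real.exp (-lam) * lam ^ 2)
    convert this using 1
    · rfl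
    have hee : Real.exp (-lam) * Real.exp lam = 1 := by
      rw [← Real.exp_add]; simp
    calc lam ^ 2 = lam ^ 2 * (rexp (-lam) * rexp lam) := by rw [hee, mul_one]
      _ = rexp (-lam) * lam ^ 2 * rexp lam := by ring
  have := h2.add (poisson_mean_series lam)
  convert this using 1
  · funext k; ring
  · ring

lemma poisson_moments {Ω : Type*} [MeasurableSpace Ω] (μ : Measure Ω) [IsProbabilityMeasure μ]
    (X : Ω → ℕ) (hX : Measurable X) (lam : ℝ) (hlam : 0 ≤ lam)
    (hp : ∀ k : ℕ, μ {ω | X ω = k} =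
      ENNReal.ofReal (Real.exp (-lam) * lam ^ k / k.factorial)) :
    MemLp (fun ω => (X ω : ℝ)) 2 μ ∧ (∫ ω, (X ω : ℝ) ∂μ) = lam ∧
      (∫ ω, ((X ω : ℝ)) ^ 2 ∂μ) = lam + lam ^ 2 := by
  have hXR : Measurable fun ω => (X ω : ℝ) := (measurable_of_countable _).comp hX
  have hmap : ∀ f : ℕ → ℝ≥0∞, ∫⁻ ω, f (X ω) ∂μ = ∑' k, f k * μ {ω | X ω = k} := by
    intro f
    rw [← lintegral_map (measurable_of_countable f) hX, lintegral_countable']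
    congr 1; funext k
    rw [Measure.map_apply hX (measurableSet_singleton k)]
    rfl
  have hkey : ∀ (h : ℕ → ℝ), (∀ k, 0 ≤ h k) → ∀ S : ℝ,
      HasSum (fun k => h k * (Real.exp (-lam) * lam ^ k / k.factorial)) S →
      ∫⁻ ω, ENNReal.ofReal (h (X ω)) ∂μ = ENNReal.ofReal S := by
    intro h hh S hS
    rw [hmap (fun k => ENNReal.ofReal (h k))]
    have heq : ∀ k : ℕ, ENNReal.ofReal (h k) * μ {ω | X ω = k} =
        ENNReal.ofReal (h k * (Real.exp (-lam) * lam ^ k / k.factorial)) := by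
      intro k; rw [hp k, ← ENNReal.ofReal_mul (hh k)]
    simp_rw [heq]
    rw [← ENNReal.ofReal_tsum_of_nonneg
      (fun k => mul_nonneg (hh k) (by positivity)) hS.summable, hS.tsum_eq]
  have hlin1 : ∫⁻ ω, ENNReal.ofReal ((X ω : ℝ)) ∂μ = ENNReal.ofReal lam :=
    hkey (fun k => (k : ℝ)) (fun k => by positivity) lam (poisson_mean_series lam)
  have hlin2 : ∫⁻ ω, ENNReal.ofReal (((X ω : ℝ)) ^ 2) ∂μ = ENNReal.ofReal (lam + lam ^ 2) :=
    hkey (fun k => ((k : ℝ)) ^ 2) (fun k => by positivity) _ (poisson_sq_series lam)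
  have hint2 : Integrable (fun ω => ((X ω : ℝ)) ^ 2) μ := by
    refine ⟨(hXR.pow_const 2).aestronglyMeasurable, ?_⟩
    rw [hasFiniteIntegral_iff_ofReal (Eventually.of_forall fun ω => by positivity)]
    rw [hlin2]; exact ENNReal.ofReal_lt_top
  have hmem : MemLp (fun ω => (X ω : ℝ)) 2 μ := by
    rw [memLp_two_iff_integrable_sq hXR.aestronglyMeasurable]
    exact hint2
  refine ⟨hmem, ?_, ?_⟩
  · rw [integral_eq_lintegral_of_nonneg_ae (Eventually.of_forall fun ω => by positivity)
      hXR.aestronglyMeasurable, hlin1, ENNReal.toReal_ofReal hlam]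
  · rw [integral_eq_lintegral_of_nonneg_ae (Eventually.of_forall fun ω => by positivity)
      (hXR.pow_const 2).aestronglyMeasurable, hlin2,
      ENNReal.toReal_ofReal (by positivity)]

end aux

theorem poisson_weighted_sum_L2_bounded (θ : ℝ) (hθ : 0 < θ)
    {Ω : Type*} [MeasurableSpace Ω] (μ : Measure Ω) [IsProbabilityMeasure μ]
    (W : ℕ → Ω → ℕ) (hmeas : ∀ ℓ, Measurable (W ℓ))
    (hindep : iIndepFun W μ)
    (hpois : ∀ ℓ : ℕ, 1 ≤ ℓ → ∀ k : ℕ,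
      μ {ω | W ℓ ω = k} =
        ENNReal.ofReal (Real.exp (-(θ / ℓ)) * (θ / ℓ) ^ k / (Nat.factorial k)))
    (g : ℝ → ℝ) (C : ℝ) (hC : 0 < C)
    (hg : ∀ x : ℝ, 0 < x → |g x| ≤ C * min x (1 / x)) :
    ∃ D : ℝ, ∀ n : ℕ, 1 ≤ n → ∀ δ : ℝ, 0 < δ → δ < 1 →
      (∫ ω, (∑ ℓ ∈ Finset.Icc 1 n, (W ℓ ω : ℝ) * |g (1 / (ℓ * δ))|) ∂μ ≤ D) ∧
        variance (fun ω => ∑ ℓ ∈ Finset.Icc 1 n, (W ℓ ω : ℝ) * |g (1 / (ℓ * δ))|) μ ≤ D ∧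
        (∫ ω, (∑ ℓ ∈ Finset.Icc 1 n, (W ℓ ω : ℝ) * g (1 / (ℓ * δ))) ^ 2 ∂μ ≤ D) := by
  refine ⟨θ * C * π + θ * C ^ 2 * π + (θ * C * π) ^ 2, ?_⟩
  intro n hn δ hδ0 hδ1
  have hπ := Real.pi_pos
  -- moments of each W ℓ
  have moments : ∀ ℓ ∈ Finset.Icc 1 n, MemLp (fun ω => (W ℓ ω : ℝ)) 2 μ ∧
      (∫ ω, (W ℓ ω : ℝ) ∂μ) = θ / ℓ ∧
      (∫ ω, ((W ℓ ω : ℝ)) ^ 2 ∂μ) = θ / ℓ + (θ / ℓ) ^ 2 := by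
    intro ℓ hℓ
    have h1 : 1 ≤ ℓ := (Finset.mem_Icc.mp hℓ).1
    have hL : (0:ℝ) < (ℓ:ℝ) := by exact_mod_cast h1
    exact poisson_moments μ (W ℓ) (hmeas ℓ) (θ / ℓ) (by positivity) (hpois ℓ h1)
  -- coefficient bounds
  have hgb : ∀ ℓ ∈ Finset.Icc 1 n, |g (1 / ((ℓ:ℝ) * δ))| ≤ C * min (1 / ((ℓ:ℝ) * δ)) ((ℓ:ℝ) * δ) := by
    intro ℓ hℓ
    have h1 : 1 ≤ ℓ := (Finset.mem_Icc.mp hℓ).1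
    have hL : (0:ℝ) < (ℓ:ℝ) := by exact_mod_cast h1
    have hx : (0:ℝ) < 1 / ((ℓ:ℝ) * δ) := by positivity
    have := hg _ hx
    rwa [one_div_one_div] at this
  have hmin1 : ∀ ℓ ∈ Finset.Icc 1 n,
      min (1 / ((ℓ:ℝ) * δ)) ((ℓ:ℝ) * δ) * (1 / (ℓ:ℝ)) = min δ (1 / ((ℓ:ℝ) ^ 2 * δ)) := by
    intro ℓ hℓ
    have h1 : 1 ≤ ℓ := (Finset.mem_Icc.mp hℓ).1
    have hL : (0:ℝ) < (ℓ:ℝ) := by exact_mod_cast h1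
    rw [min_mul_of_nonneg _ _ (by positivity : (0:ℝ) ≤ 1 / (ℓ:ℝ))]
    rw [min_comm]
    congr 1
    · field_simp
    · field_simp
  have hminle1 : ∀ ℓ ∈ Finset.Icc 1 n, min (1 / ((ℓ:ℝ) * δ)) ((ℓ:ℝ) * δ) ≤ 1 := by
    intro ℓ hℓ
    have h1 : 1 ≤ ℓ := (Finset.mem_Icc.mp hℓ).1
    have hL : (0:ℝ) < (ℓ:ℝ) := by exact_mod_cast h1
    rcases le_total ((ℓ:ℝ) * δ) 1 with h | h
    · exact le_trans (min_le_right _ _) h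
    · refine le_trans (min_le_left _ _) ?_
      rw [div_le_one (by positivity)]; linarith
  have hcoef : ∀ ℓ ∈ Finset.Icc 1 n,
      |g (1 / ((ℓ:ℝ) * δ))| * (θ / (ℓ:ℝ)) ≤ θ * C * min δ (1 / ((ℓ:ℝ) ^ 2 * δ)) := by
    intro ℓ hℓ
    have h1 : 1 ≤ ℓ := (Finset.mem_Icc.mp hℓ).1
    have hL : (0:ℝ) < (ℓ:ℝ) := by exact_mod_cast h1
    have := mul_le_mul_of_nonneg_right (hgb ℓ hℓ) (by positivity : (0:ℝ) ≤ θ / (ℓ:ℝ))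
    refine this.trans ?_
    rw [← hmin1 ℓ hℓ]
    have : θ / (ℓ:ℝ) = θ * (1 / (ℓ:ℝ)) := by ring
    rw [this]
    ring_nf
    apply le_of_eq
    ring
  have hcoef2 : ∀ ℓ ∈ Finset.Icc 1 n,
      |g (1 / ((ℓ:ℝ) * δ))| ^ 2 * (θ / (ℓ:ℝ)) ≤ θ * C ^ 2 * min δ (1 / ((ℓ:ℝ) ^ 2 * δ)) := by
    intro ℓ hℓ
    have h1 : 1 ≤ ℓ := (Finset.mem_Icc.mp hℓ).1
    have hL : (0:ℝ) < (ℓ:ℝ) := by exact_mod_cast h1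
    have hm0 : (0:ℝ) ≤ min (1 / ((ℓ:ℝ) * δ)) ((ℓ:ℝ) * δ) := le_min (by positivity) (by positivity)
    have hsq : |g (1 / ((ℓ:ℝ) * δ))| ^ 2 ≤ C ^ 2 * min (1 / ((ℓ:ℝ) * δ)) ((ℓ:ℝ) * δ) := by
      have h := hgb ℓ hℓ
      have h1' := hminle1 ℓ hℓ
      calc |g (1 / ((ℓ:ℝ) * δ))| ^ 2 ≤ (C * min (1 / ((ℓ:ℝ) * δ)) ((ℓ:ℝ) * δ)) ^ 2 :=
            pow_le_pow_left₀ (abs_nonneg _) h 2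
        _ = C ^ 2 * (min (1 / ((ℓ:ℝ) * δ)) ((ℓ:ℝ) * δ)) ^ 2 := by ring
        _ ≤ C ^ 2 * min (1 / ((ℓ:ℝ) * δ)) ((ℓ:ℝ) * δ) := by
            have hm : (min (1 / ((ℓ:ℝ) * δ)) ((ℓ:ℝ) * δ)) ^ 2 ≤
                min (1 / ((ℓ:ℝ) * δ)) ((ℓ:ℝ) * δ) := by nlinarith
            exact mul_le_mul_of_nonneg_left hm (by positivity)
    have := mul_le_mul_of_nonneg_right hsq (by positivity : (0:ℝ) ≤ θ / (ℓ:ℝ))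
    refine this.trans ?_
    rw [← hmin1 ℓ hℓ]
    apply le_of_eq
    ring
  have hsum := min_sum_le n δ hδ0
  have hmean_b : ∑ ℓ ∈ Finset.Icc 1 n, |g (1 / ((ℓ:ℝ) * δ))| * (θ / (ℓ:ℝ)) ≤ θ * C * π := by
    refine (Finset.sum_le_sum hcoef).trans ?_
    rw [← Finset.mul_sum]
    exact mul_le_mul_of_nonneg_left hsum (by positivity)
  have hvar_b : ∑ ℓ ∈ Finset.Icc 1 n, |g (1 / ((ℓ:ℝ) * δ))| ^ 2 * (θ / (ℓ:ℝ)) ≤ θ * C ^ 2 * π := by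
    refine (Finset.sum_le_sum hcoef2).trans ?_
    rw [← Finset.mul_sum]
    exact mul_le_mul_of_nonneg_left hsum (by positivity)
  -- generic machinery for coefficients c
  have hmemY : ∀ (c : ℕ → ℝ) (ℓ : ℕ), ℓ ∈ Finset.Icc 1 n →
      MemLp (fun ω => (W ℓ ω : ℝ) * c ℓ) 2 μ := by
    intro c ℓ hℓ
    have h : (fun ω => (W ℓ ω : ℝ) * c ℓ) = fun ω => c ℓ * (W ℓ ω : ℝ) := by
      funext ω; ring
    rw [h]
    exact (moments ℓ hℓ).1.const_mul (c ℓ)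
  have hmainE : ∀ c : ℕ → ℝ,
      ∫ ω, (∑ ℓ ∈ Finset.Icc 1 n, (W ℓ ω : ℝ) * c ℓ) ∂μ
        = ∑ ℓ ∈ Finset.Icc 1 n, (θ / (ℓ:ℝ)) * c ℓ := by
    intro c
    rw [integral_finset_sum _ (fun ℓ hℓ => ((hmemY c ℓ hℓ).integrable one_le_two))]
    refine Finset.sum_congr rfl fun ℓ hℓ => ?_
    rw [integral_mul_const, (moments ℓ hℓ).2.1]
  have hvarW : ∀ ℓ ∈ Finset.Icc 1 n, variance (fun ω => (W ℓ ω : ℝ)) μ = θ / (ℓ:ℝ) := by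
    intro ℓ hℓ
    rw [variance_eq_sub (moments ℓ hℓ).1]
    have h2 : ∫ ω, ((fun ω => (W ℓ ω : ℝ)) ^ 2) ω ∂μ = ∫ ω, ((W ℓ ω : ℝ)) ^ 2 ∂μ := by
      simp [Pi.pow_apply]
    rw [h2, (moments ℓ hℓ).2.2, (moments ℓ hℓ).2.1]
    ring
  have hmainV : ∀ c : ℕ → ℝ,
      variance (fun ω => ∑ ℓ ∈ Finset.Icc 1 n, (W ℓ ω : ℝ) * c ℓ) μ
        = ∑ ℓ ∈ Finset.Icc 1 n, (c ℓ) ^ 2 * (θ / (ℓ:ℝ)) := by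
    intro c
    have hfun : (fun ω => ∑ ℓ ∈ Finset.Icc 1 n, (W ℓ ω : ℝ) * c ℓ)
        = ∑ ℓ ∈ Finset.Icc 1 n, (fun ω => (W ℓ ω : ℝ) * c ℓ) := by
      funext ω; rw [Finset.sum_apply]
    rw [hfun, IndepFun.variance_sum (fun ℓ hℓ => hmemY c ℓ hℓ) ?_]
    · refine Finset.sum_congr rfl fun ℓ hℓ => ?_
      have h : (fun ω => (W ℓ ω : ℝ) * c ℓ) = fun ω => c ℓ * (W ℓ ω : ℝ) := by
        funext ω; ring
      rw [h, variance_const_mul, hvarW ℓ hℓ]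
    · intro i hi j hj hij
      have hind := hindep.indepFun hij
      exact hind.comp (measurable_of_countable (fun k : ℕ => (k:ℝ) * c i))
        (measurable_of_countable (fun k : ℕ => (k:ℝ) * c j))
  -- Part 1: mean bound
  have hD1 : ∫ ω, (∑ ℓ ∈ Finset.Icc 1 n, (W ℓ ω : ℝ) * |g (1 / (↑ℓ * δ))|) ∂μ ≤ θ * C * π := by
    rw [hmainE (fun ℓ => |g (1 / ((ℓ:ℝ) * δ))|)]
    refine le_trans (le_of_eq (Finset.sum_congr rfl fun ℓ hℓ => mul_comm _ _)) hmean_b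
  have hD2 : variance (fun ω => ∑ ℓ ∈ Finset.Icc 1 n, (W ℓ ω : ℝ) * |g (1 / (↑ℓ * δ))|) μ
      ≤ θ * C ^ 2 * π := by
    rw [hmainV (fun ℓ => |g (1 / ((ℓ:ℝ) * δ))|)]
    simpa using hvar_b
  refine ⟨?_, ?_, ?_⟩
  · nlinarith [sq_nonneg (θ * C * π), mul_pos (mul_pos hθ (mul_pos hC hC)) hπ]
  · nlinarith [sq_nonneg (θ * C * π), mul_pos (mul_pos hθ hC) hπ]
  -- Part 3
  · have hmemS : MemLp (fun ω => ∑ ℓ ∈ Finset.Icc 1 n, (W ℓ ω : ℝ) * g (1 / (↑ℓ * δ))) 2 μ := by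
      have hfun : (fun ω => ∑ ℓ ∈ Finset.Icc 1 n, (W ℓ ω : ℝ) * g (1 / ((ℓ:ℝ) * δ)))
          = ∑ ℓ ∈ Finset.Icc 1 n, (fun ω => (W ℓ ω : ℝ) * g (1 / ((ℓ:ℝ) * δ))) := by
        funext ω; rw [Finset.sum_apply]
      rw [hfun]
      exact memLp_finset_sum' _ (fun ℓ hℓ => hmemY (fun ℓ => g (1 / ((ℓ:ℝ) * δ))) ℓ hℓ)
    have hvd := variance_eq_sub hmemS
    have hES : ∫ ω, (∑ ℓ ∈ Finset.Icc 1 n, (W ℓ ω : ℝ) * g (1 / (↑ℓ * δ))) ∂μ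
        = ∑ ℓ ∈ Finset.Icc 1 n, (θ / (ℓ:ℝ)) * g (1 / ((ℓ:ℝ) * δ)) :=
      hmainE (fun ℓ => g (1 / ((ℓ:ℝ) * δ)))
    have hESb : |∫ ω, (∑ ℓ ∈ Finset.Icc 1 n, (W ℓ ω : ℝ) * g (1 / (↑ℓ * δ))) ∂μ| ≤ θ * C * π := by
      rw [hES]
      refine le_trans (Finset.abs_sum_le_sum_abs _ _) ?_
      refine le_trans (le_of_eq (Finset.sum_congr rfl fun ℓ hℓ => ?_)) hmean_b
      have h1 : 1 ≤ ℓ := (Finset.mem_Icc.mp hℓ).1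
      have hL : (0:ℝ) < (ℓ:ℝ) := by exact_mod_cast h1
      rw [abs_mul, abs_of_nonneg (by positivity : (0:ℝ) ≤ θ / (ℓ:ℝ)), mul_comm]
    have hVS : variance (fun ω => ∑ ℓ ∈ Finset.Icc 1 n, (W ℓ ω : ℝ) * g (1 / (↑ℓ * δ))) μ
        ≤ θ * C ^ 2 * π := by
      rw [hmainV (fun ℓ => g (1 / ((ℓ:ℝ) * δ)))]
      refine le_trans (le_of_eq (Finset.sum_congr rfl fun ℓ hℓ => ?_)) hvar_b
      rw [sq_abs]
    simp only [Pi.pow_apply] at hvd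
    have hrw : ∫ ω, (∑ ℓ ∈ Finset.Icc 1 n, (W ℓ ω : ℝ) * g (1 / (↑ℓ * δ))) ^ 2 ∂μ
        = variance (fun ω => ∑ ℓ ∈ Finset.Icc 1 n, (W ℓ ω : ℝ) * g (1 / (↑ℓ * δ))) μ
          + (∫ ω, (∑ ℓ ∈ Finset.Icc 1 n, (W ℓ ω : ℝ) * g (1 / (↑ℓ * δ))) ∂μ) ^ 2 := by
      rw [hvd]; ring
    rw [hrw]
    have habs := abs_le.mp hESb
    have hsq2 : (∫ ω, (∑ ℓ ∈ Finset.Icc 1 n, (W ℓ ω : ℝ) * g (1 / (↑ℓ * δ))) ∂μ) ^ 2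
        ≤ (θ * C * π) ^ 2 := by nlinarith [habs.1, habs.2]
    nlinarith [mul_pos (mul_pos hθ hC) hπ]
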